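/- Let (φ_{j1,j2,j3}) be a family satisfying the genus-two Pieri rule with φ_{0,0,0} = 1. Then the family (φ_{j1,j2,j3})_{(j1,j2,j3)∈J} is a basis of H as a ℂ-vector space (it is linearly independent and spans H). -/

import Mathlib

/-- A triple of integers is *admissible* if all entries are nonnegative,
the triangle inequality `|j1 - j2| ≤ j3 ≤ j1 + j2` holds, and `j1+j2+j3` is even. -/
def Admissible (j : ℤ × ℤ × ℤ) : Prop :=
  0 ≤ j.1 ∧ 0 ≤ j.2.1 ∧ 0 ≤ j.2.2 ∧
  |j.1 - j.2.1| ≤ j.2.2 ∧ j.2.2 ≤ j.1 + j.2.1 ∧ 2 ∣ (j.1 + j.2.1 + j.2.2)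

/-- Pieri coefficient `K_{a,b}(j1,j2,j3)` as a complex number. -/
noncomputable def Kc (a b j1 j2 j3 : ℤ) : ℂ :=
  ((a * b : ℤ) : ℂ) *
    (((a*j1 + b*j2 + j3 + a + b + 2 : ℤ) : ℂ) * ((a*j1 + b*j2 - j3 + a + b : ℤ) : ℂ)) /
    (4 * ((j1 : ℂ) + 1) * ((j2 : ℂ) + 1))

/-- Laurent polynomials in three variables, as finitely supported
coefficient functions on the exponent lattice `ℤ³`.  The coordinates of a
monomial `m` are the exponents of `x12`, `x13`, `x23` respectively. -/
abbrev LP := (ℤ × ℤ × ℤ) →₀ ℂ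

/-- Multiplication of a Laurent polynomial by the monomial `x^e`. -/
noncomputable def shiftLP (e : ℤ × ℤ × ℤ) (p : LP) : LP :=
  Finsupp.mapDomain (fun m => e + m) p

/-- Membership in `H`: invariance under each inversion `x_{ij} ↦ x_{ij}⁻¹`. -/
def InvariantH (p : LP) : Prop :=
  (∀ m : ℤ × ℤ × ℤ, p (-m.1, m.2.1, m.2.2) = p m) ∧
  (∀ m : ℤ × ℤ × ℤ, p (m.1, -m.2.1, m.2.2) = p m) ∧
  (∀ m : ℤ × ℤ × ℤ, p (m.1, m.2.1, -m.2.2) = p m)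

/-- A family `φ` (defined for all integer triples, vanishing on non-admissible ones,
with values in `H`) satisfies the genus-two Pieri rule with `φ_{0,0,0} = 1`. -/
structure IsPieriFamily (φ : ℤ × ℤ × ℤ → LP) : Prop where
  zero_of_not_admissible : ∀ j, ¬ Admissible j → φ j = 0
  mem_H : ∀ j, InvariantH (φ j)
  init : φ (0, 0, 0) = Finsupp.single (0, 0, 0) 1
  pieri12 : ∀ j1 j2 j3 : ℤ, Admissible (j1, j2, j3) →
    shiftLP (1, 0, 0) (φ (j1, j2, j3)) + shiftLP (-1, 0, 0) (φ (j1, j2, j3)) =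
      Kc 1 1 j1 j2 j3 • φ (j1+1, j2+1, j3) + Kc 1 (-1) j1 j2 j3 • φ (j1+1, j2-1, j3) +
      Kc (-1) 1 j1 j2 j3 • φ (j1-1, j2+1, j3) + Kc (-1) (-1) j1 j2 j3 • φ (j1-1, j2-1, j3)
  pieri13 : ∀ j1 j2 j3 : ℤ, Admissible (j1, j2, j3) →
    shiftLP (0, 1, 0) (φ (j1, j2, j3)) + shiftLP (0, -1, 0) (φ (j1, j2, j3)) =
      Kc 1 1 j1 j3 j2 • φ (j1+1, j2, j3+1) + Kc 1 (-1) j1 j3 j2 • φ (j1+1, j2, j3-1) +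
      Kc (-1) 1 j1 j3 j2 • φ (j1-1, j2, j3+1) + Kc (-1) (-1) j1 j3 j2 • φ (j1-1, j2, j3-1)
  pieri23 : ∀ j1 j2 j3 : ℤ, Admissible (j1, j2, j3) →
    shiftLP (0, 0, 1) (φ (j1, j2, j3)) + shiftLP (0, 0, -1) (φ (j1, j2, j3)) =
      Kc 1 1 j2 j3 j1 • φ (j1, j2+1, j3+1) + Kc 1 (-1) j2 j3 j1 • φ (j1, j2+1, j3-1) +
      Kc (-1) 1 j2 j3 j1 • φ (j1, j2-1, j3+1) + Kc (-1) (-1) j2 j3 j1 • φ (j1, j2-1, j3-1)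

def nA (m : ℤ × ℤ × ℤ) : ℕ × ℕ × ℕ := (m.1.natAbs, m.2.1.natAbs, m.2.2.natAbs)
def kdeg (k : ℕ × ℕ × ℕ) : ℕ := k.1 + k.2.1 + k.2.2
def degN (m : ℤ × ℤ × ℤ) : ℕ := m.1.natAbs + m.2.1.natAbs + m.2.2.natAbs
def jmap (k : ℕ × ℕ × ℕ) : ℤ × ℤ × ℤ :=
  ((k.1 : ℤ) + k.2.1, (k.1 : ℤ) + k.2.2, (k.2.1 : ℤ) + k.2.2)
def emb (k : ℕ × ℕ × ℕ) : ℤ × ℤ × ℤ := ((k.1 : ℤ), (k.2.1 : ℤ), (k.2.2 : ℤ))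

def Good (φ : ℤ × ℤ × ℤ → LP) (k : ℕ × ℕ × ℕ) : Prop :=
  ∃ c0 : ℂ, c0 ≠ 0 ∧ ∀ m : ℤ × ℤ × ℤ, kdeg k ≤ degN m →
    φ (jmap k) m = if nA m = k then c0 else 0

lemma adm_iff (j1 j2 j3 : ℤ) : Admissible (j1, j2, j3) ↔
    (0 ≤ j1 + j2 - j3 ∧ 0 ≤ j1 - j2 + j3 ∧ 0 ≤ -j1 + j2 + j3 ∧ 2 ∣ (j1 + j2 + j3)) := by
  unfold Admissible
  simp only [abs_le]
  omega

lemma adm_jmap (k : ℕ × ℕ × ℕ) : Admissible (jmap k) := by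
  obtain ⟨a, b, c⟩ := k
  rw [jmap, adm_iff]
  push_cast
  omega

lemma shiftLP_apply (e : ℤ × ℤ × ℤ) (p : LP) (m : ℤ × ℤ × ℤ) :
    shiftLP e p m = p (m - e) := by
  have h : m = e + (m - e) := by ring
  conv_lhs => rw [h]
  exact Finsupp.mapDomain_apply (fun x y hxy => by simpa using hxy) p (m - e)

lemma intc_ne (n : ℤ) (h : n ≠ 0) : (n : ℂ) ≠ 0 := Int.cast_ne_zero.mpr h

lemma Kc11_ne (j1 j2 j3 : ℤ) (h1 : 0 ≤ j1) (h2 : 0 ≤ j2) (h3 : 0 ≤ j3)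
    (h : j3 ≤ j1 + j2) : Kc 1 1 j1 j2 j3 ≠ 0 := by
  unfold Kc
  apply div_ne_zero
  · exact mul_ne_zero (intc_ne _ (by norm_num))
      (mul_ne_zero (intc_ne _ (by omega)) (intc_ne _ (by omega)))
  · have a1 : ((j1 : ℂ) + 1) ≠ 0 := by
      have := intc_ne (j1 + 1) (by omega); push_cast at this; exact this
    have a2 : ((j2 : ℂ) + 1) ≠ 0 := by
      have := intc_ne (j2 + 1) (by omega); push_cast at this; exact this
    exact mul_ne_zero (mul_ne_zero (by norm_num) a1) a2

lemma key1 (c0 : ℂ) (a b c : ℕ) (m1 m2 m3 : ℤ)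
    (hdeg : a + 1 + b + c ≤ m1.natAbs + m2.natAbs + m3.natAbs) :
    ((if ((m1-1).natAbs = a ∧ m2.natAbs = b ∧ m3.natAbs = c) then c0 else 0) +
     (if ((m1+1).natAbs = a ∧ m2.natAbs = b ∧ m3.natAbs = c) then c0 else 0)) =
    (if (m1.natAbs = a + 1 ∧ m2.natAbs = b ∧ m3.natAbs = c) then c0 else 0) := by
  by_cases h2 : m2.natAbs = b ∧ m3.natAbs = c
  · obtain ⟨hb, hc⟩ := h2
    subst hb hc
    simp only [and_self, and_true]
    split_ifs <;> first | (exfalso; omega) | simp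
  · rw [if_neg (fun h => h2 ⟨h.2.1, h.2.2⟩), if_neg (fun h => h2 ⟨h.2.1, h.2.2⟩),
      if_neg (fun h => h2 ⟨h.2.1, h.2.2⟩), add_zero]

lemma key2 (c0 : ℂ) (a b c : ℕ) (m1 m2 m3 : ℤ)
    (hdeg : a + (b + 1) + c ≤ m1.natAbs + m2.natAbs + m3.natAbs) :
    ((if (m1.natAbs = a ∧ (m2-1).natAbs = b ∧ m3.natAbs = c) then c0 else 0) +
     (if (m1.natAbs = a ∧ (m2+1).natAbs = b ∧ m3.natAbs = c) then c0 else 0)) =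
    (if (m1.natAbs = a ∧ m2.natAbs = b + 1 ∧ m3.natAbs = c) then c0 else 0) := by
  by_cases h2 : m1.natAbs = a ∧ m3.natAbs = c
  · obtain ⟨hb, hc⟩ := h2
    subst hb hc
    simp only [and_self, true_and, and_true]
    split_ifs <;> first | (exfalso; omega) | simp
  · rw [if_neg (fun h => h2 ⟨h.1, h.2.2⟩), if_neg (fun h => h2 ⟨h.1, h.2.2⟩),
      if_neg (fun h => h2 ⟨h.1, h.2.2⟩), add_zero]

lemma key3 (c0 : ℂ) (a b c : ℕ) (m1 m2 m3 : ℤ)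
    (hdeg : a + b + (c + 1) ≤ m1.natAbs + m2.natAbs + m3.natAbs) :
    ((if (m1.natAbs = a ∧ m2.natAbs = b ∧ (m3-1).natAbs = c) then c0 else 0) +
     (if (m1.natAbs = a ∧ m2.natAbs = b ∧ (m3+1).natAbs = c) then c0 else 0)) =
    (if (m1.natAbs = a ∧ m2.natAbs = b ∧ m3.natAbs = c + 1) then c0 else 0) := by
  by_cases h2 : m1.natAbs = a ∧ m2.natAbs = b
  · obtain ⟨hb, hc⟩ := h2
    subst hb hc
    simp only [and_self, true_and]
    split_ifs <;> first | (exfalso; omega) | simp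
  · rw [if_neg (fun h => h2 ⟨h.1, h.2.1⟩), if_neg (fun h => h2 ⟨h.1, h.2.1⟩),
      if_neg (fun h => h2 ⟨h.1, h.2.1⟩), add_zero]

lemma good_van {φ : ℤ × ℤ × ℤ → LP} {k : ℕ × ℕ × ℕ} (h : Good φ k) :
    ∀ m : ℤ × ℤ × ℤ, kdeg k < degN m → φ (jmap k) m = 0 := by
  obtain ⟨c0, hc0, hval⟩ := h
  intro m hm
  rw [hval m hm.le, if_neg]
  intro he
  have : kdeg (nA m) = degN m := rfl
  rw [he] at this
  omega

theorem good_all (φ : ℤ × ℤ × ℤ → LP) (hφ : IsPieriFamily φ) :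
    ∀ n (k : ℕ × ℕ × ℕ), kdeg k = n → Good φ k := by
  intro n
  induction n using Nat.strong_induction_on with
  | _ n IH =>
  intro k hk
  obtain ⟨a, b, c⟩ := k
  match a, b, c with
  | 0, 0, 0 =>
    refine ⟨1, one_ne_zero, ?_⟩
    intro m _
    rw [show jmap (0,0,0) = ((0:ℤ),(0:ℤ),(0:ℤ)) from by simp [jmap], hφ.init,
      Finsupp.single_apply]
    obtain ⟨m1, m2, m3⟩ := m
    have : (((0:ℤ),(0:ℤ),(0:ℤ)) = (m1, m2, m3)) ↔ (nA (m1,m2,m3) = (0,0,0)) := by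
      simp only [nA, Prod.mk.injEq]
      omega
    rw [if_congr this rfl rfl]
  | a+1, b, c =>
    -- use pieri12 at (a,b,c)
    have hkd : kdeg (a+1,b,c) = n := hk
    simp only [kdeg] at hkd
    obtain ⟨c0, hc0, hval⟩ : Good φ (a,b,c) :=
      IH (a+b+c) (by omega) (a,b,c) rfl
    simp only [jmap] at hval
    have heq := hφ.pieri12 ((a:ℤ)+b) ((a:ℤ)+c) ((b:ℤ)+c) (adm_jmap (a,b,c))
    have hK : Kc 1 1 ((a:ℤ)+b) ((a:ℤ)+c) ((b:ℤ)+c) ≠ 0 :=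
      Kc11_ne _ _ _ (by omega) (by omega) (by omega) (by omega)
    rw [show ((a:ℤ)+b+1, (a:ℤ)+c+1, (b:ℤ)+c) = jmap (a+1,b,c) from by
      simp only [jmap, Prod.mk.injEq]; push_cast; refine ⟨?_, ?_, ?_⟩ <;> first | trivial | omega] at heq
    have hz2 : ∀ m : ℤ × ℤ × ℤ, a+1+b+c ≤ degN m →
        φ ((a:ℤ)+b+1, (a:ℤ)+c-1, (b:ℤ)+c) m = 0 := by
      cases c with
      | zero =>
        intro m _
        rw [hφ.zero_of_not_admissible _ (by rw [adm_iff]; push_cast; omega)]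
        rfl
      | succ c' =>
        intro m hm
        rw [show ((a:ℤ)+(b:ℤ)+1, (a:ℤ)+((c'+1:ℕ):ℤ)-1, (b:ℤ)+((c'+1:ℕ):ℤ)) = jmap (a, b+1, c') from by
          simp only [jmap, Prod.mk.injEq]; push_cast; refine ⟨?_, ?_, ?_⟩ <;> first | trivial | omega]
        have hg : Good φ (a,b+1,c') := IH (a+(b+1)+c') (by omega) (a,b+1,c') rfl
        exact good_van hg m (by simp only [kdeg, degN] at hm ⊢; omega)
    have hz3 : ∀ m : ℤ × ℤ × ℤ, a+1+b+c ≤ degN m →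
        φ ((a:ℤ)+b-1, (a:ℤ)+c+1, (b:ℤ)+c) m = 0 := by
      cases b with
      | zero =>
        intro m _
        rw [hφ.zero_of_not_admissible _ (by rw [adm_iff]; push_cast; omega)]
        rfl
      | succ b' =>
        intro m hm
        rw [show ((a:ℤ)+((b'+1:ℕ):ℤ)-1, (a:ℤ)+(c:ℤ)+1, ((b'+1:ℕ):ℤ)+(c:ℤ)) = jmap (a, b', c+1) from by
          simp only [jmap, Prod.mk.injEq]; push_cast; refine ⟨?_, ?_, ?_⟩ <;> first | trivial | omega]
        have hg : Good φ (a,b',c+1) := IH (a+b'+(c+1)) (by omega) (a,b',c+1) rfl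
        exact good_van hg m (by simp only [kdeg, degN] at hm ⊢; omega)
    have hz4 : ∀ m : ℤ × ℤ × ℤ, a+1+b+c ≤ degN m →
        φ ((a:ℤ)+b-1, (a:ℤ)+c-1, (b:ℤ)+c) m = 0 := by
      cases a with
      | zero =>
        intro m _
        rw [hφ.zero_of_not_admissible _ (by rw [adm_iff]; push_cast; omega)]
        rfl
      | succ a' =>
        intro m hm
        rw [show (((a'+1:ℕ):ℤ)+(b:ℤ)-1, ((a'+1:ℕ):ℤ)+(c:ℤ)-1, (b:ℤ)+(c:ℤ)) = jmap (a', b, c) from by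
          simp only [jmap, Prod.mk.injEq]; push_cast; refine ⟨?_, ?_, ?_⟩ <;> first | trivial | omega]
        have hg : Good φ (a',b,c) := IH (a'+b+c) (by omega) (a',b,c) rfl
        exact good_van hg m (by simp only [kdeg, degN] at hm ⊢; omega)
    refine ⟨(Kc 1 1 ((a:ℤ)+b) ((a:ℤ)+c) ((b:ℤ)+c))⁻¹ * c0,
      mul_ne_zero (inv_ne_zero hK) hc0, ?_⟩
    rintro ⟨m1, m2, m3⟩ hdegm
    simp only [kdeg] at hdegm
    have hm := DFunLike.congr_fun heq (m1, m2, m3)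
    simp only [Finsupp.add_apply, Finsupp.smul_apply, smul_eq_mul, shiftLP_apply,
      Prod.mk_sub_mk, sub_zero, sub_neg_eq_add] at hm
    rw [hz2 _ hdegm, hz3 _ hdegm, hz4 _ hdegm, mul_zero, mul_zero, mul_zero,
      add_zero, add_zero, add_zero] at hm
    rw [hval (m1-1, m2, m3) (by simp only [kdeg, degN] at hdegm ⊢; omega),
      hval (m1+1, m2, m3) (by simp only [kdeg, degN] at hdegm ⊢; omega)] at hm
    simp only [nA, Prod.mk.injEq] at hm
    have hdegm' : a + 1 + b + c ≤ m1.natAbs + m2.natAbs + m3.natAbs := by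
      simp only [degN] at hdegm; omega
    rw [key1 c0 a b c m1 m2 m3 hdegm'] at hm
    rw [← inv_mul_cancel_left₀ hK ((φ (jmap (a+1,b,c))) (m1,m2,m3)), ← hm]
    simp only [nA, Prod.mk.injEq]
    split_ifs with h
    · rfl
    · rw [mul_zero]
  | a, b+1, c =>
    -- use pieri13 at (a,b,c)
    have hkd : kdeg (a,b+1,c) = n := hk
    simp only [kdeg] at hkd
    obtain ⟨c0, hc0, hval⟩ : Good φ (a,b,c) :=
      IH (a+b+c) (by omega) (a,b,c) rfl
    simp only [jmap] at hval
    have heq := hφ.pieri13 ((a:ℤ)+b) ((a:ℤ)+c) ((b:ℤ)+c) (adm_jmap (a,b,c))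
    have hK : Kc 1 1 ((a:ℤ)+b) ((b:ℤ)+c) ((a:ℤ)+c) ≠ 0 :=
      Kc11_ne _ _ _ (by omega) (by omega) (by omega) (by omega)
    rw [show ((a:ℤ)+b+1, (a:ℤ)+c, (b:ℤ)+c+1) = jmap (a,b+1,c) from by
      simp only [jmap, Prod.mk.injEq]; push_cast; refine ⟨?_, ?_, ?_⟩ <;> first | trivial | omega] at heq
    have hz2 : ∀ m : ℤ × ℤ × ℤ, a+(b+1)+c ≤ degN m →
        φ ((a:ℤ)+b+1, (a:ℤ)+c, (b:ℤ)+c-1) m = 0 := by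
      cases c with
      | zero =>
        intro m _
        rw [hφ.zero_of_not_admissible _ (by rw [adm_iff]; push_cast; omega)]
        rfl
      | succ c' =>
        intro m hm
        rw [show ((a:ℤ)+(b:ℤ)+1, (a:ℤ)+((c'+1:ℕ):ℤ), (b:ℤ)+((c'+1:ℕ):ℤ)-1) = jmap (a+1, b, c') from by
          simp only [jmap, Prod.mk.injEq]; push_cast; refine ⟨?_, ?_, ?_⟩ <;> first | trivial | omega]
        have hg : Good φ (a+1,b,c') := IH ((a+1)+b+c') (by omega) (a+1,b,c') rfl
        exact good_van hg m (by simp only [kdeg, degN] at hm ⊢; omega)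
    have hz3 : ∀ m : ℤ × ℤ × ℤ, a+(b+1)+c ≤ degN m →
        φ ((a:ℤ)+b-1, (a:ℤ)+c, (b:ℤ)+c+1) m = 0 := by
      cases a with
      | zero =>
        intro m _
        rw [hφ.zero_of_not_admissible _ (by rw [adm_iff]; push_cast; omega)]
        rfl
      | succ a' =>
        intro m hm
        rw [show (((a'+1:ℕ):ℤ)+(b:ℤ)-1, ((a'+1:ℕ):ℤ)+(c:ℤ), (b:ℤ)+(c:ℤ)+1) = jmap (a', b, c+1) from by
          simp only [jmap, Prod.mk.injEq]; push_cast; refine ⟨?_, ?_, ?_⟩ <;> first | trivial | omega]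
        have hg : Good φ (a',b,c+1) := IH (a'+b+(c+1)) (by omega) (a',b,c+1) rfl
        exact good_van hg m (by simp only [kdeg, degN] at hm ⊢; omega)
    have hz4 : ∀ m : ℤ × ℤ × ℤ, a+(b+1)+c ≤ degN m →
        φ ((a:ℤ)+b-1, (a:ℤ)+c, (b:ℤ)+c-1) m = 0 := by
      cases b with
      | zero =>
        intro m _
        rw [hφ.zero_of_not_admissible _ (by rw [adm_iff]; push_cast; omega)]
        rfl
      | succ b' =>
        intro m hm
        rw [show ((a:ℤ)+((b'+1:ℕ):ℤ)-1, (a:ℤ)+(c:ℤ), ((b'+1:ℕ):ℤ)+(c:ℤ)-1) = jmap (a, b', c) from by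
          simp only [jmap, Prod.mk.injEq]; push_cast; refine ⟨?_, ?_, ?_⟩ <;> first | trivial | omega]
        have hg : Good φ (a,b',c) := IH (a+b'+c) (by omega) (a,b',c) rfl
        exact good_van hg m (by simp only [kdeg, degN] at hm ⊢; omega)
    refine ⟨(Kc 1 1 ((a:ℤ)+b) ((b:ℤ)+c) ((a:ℤ)+c))⁻¹ * c0,
      mul_ne_zero (inv_ne_zero hK) hc0, ?_⟩
    rintro ⟨m1, m2, m3⟩ hdegm
    simp only [kdeg] at hdegm
    have hm := DFunLike.congr_fun heq (m1, m2, m3)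
    simp only [Finsupp.add_apply, Finsupp.smul_apply, smul_eq_mul, shiftLP_apply,
      Prod.mk_sub_mk, sub_zero, sub_neg_eq_add] at hm
    rw [hz2 _ hdegm, hz3 _ hdegm, hz4 _ hdegm, mul_zero, mul_zero, mul_zero,
      add_zero, add_zero, add_zero] at hm
    rw [hval (m1, m2-1, m3) (by simp only [kdeg, degN] at hdegm ⊢; omega),
      hval (m1, m2+1, m3) (by simp only [kdeg, degN] at hdegm ⊢; omega)] at hm
    simp only [nA, Prod.mk.injEq] at hm
    have hdegm' : a + (b + 1) + c ≤ m1.natAbs + m2.natAbs + m3.natAbs := by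
      simp only [degN] at hdegm; omega
    rw [key2 c0 a b c m1 m2 m3 hdegm'] at hm
    rw [← inv_mul_cancel_left₀ hK ((φ (jmap (a,b+1,c))) (m1,m2,m3)), ← hm]
    simp only [nA, Prod.mk.injEq]
    split_ifs with h
    · rfl
    · rw [mul_zero]
  | a, b, c+1 =>
    -- use pieri23 at (a,b,c)
    have hkd : kdeg (a,b,c+1) = n := hk
    simp only [kdeg] at hkd
    obtain ⟨c0, hc0, hval⟩ : Good φ (a,b,c) :=
      IH (a+b+c) (by omega) (a,b,c) rfl
    simp only [jmap] at hval
    have heq := hφ.pieri23 ((a:ℤ)+b) ((a:ℤ)+c) ((b:ℤ)+c) (adm_jmap (a,b,c))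
    have hK : Kc 1 1 ((a:ℤ)+c) ((b:ℤ)+c) ((a:ℤ)+b) ≠ 0 :=
      Kc11_ne _ _ _ (by omega) (by omega) (by omega) (by omega)
    rw [show ((a:ℤ)+b, (a:ℤ)+c+1, (b:ℤ)+c+1) = jmap (a,b,c+1) from by
      simp only [jmap, Prod.mk.injEq]; push_cast; refine ⟨?_, ?_, ?_⟩ <;> first | trivial | omega] at heq
    have hz2 : ∀ m : ℤ × ℤ × ℤ, a+b+(c+1) ≤ degN m →
        φ ((a:ℤ)+b, (a:ℤ)+c+1, (b:ℤ)+c-1) m = 0 := by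
      cases b with
      | zero =>
        intro m _
        rw [hφ.zero_of_not_admissible _ (by rw [adm_iff]; push_cast; omega)]
        rfl
      | succ b' =>
        intro m hm
        rw [show ((a:ℤ)+((b'+1:ℕ):ℤ), (a:ℤ)+(c:ℤ)+1, ((b'+1:ℕ):ℤ)+(c:ℤ)-1) = jmap (a+1, b', c) from by
          simp only [jmap, Prod.mk.injEq]; push_cast; refine ⟨?_, ?_, ?_⟩ <;> first | trivial | omega]
        have hg : Good φ (a+1,b',c) := IH ((a+1)+b'+c) (by omega) (a+1,b',c) rfl
        exact good_van hg m (by simp only [kdeg, degN] at hm ⊢; omega)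
    have hz3 : ∀ m : ℤ × ℤ × ℤ, a+b+(c+1) ≤ degN m →
        φ ((a:ℤ)+b, (a:ℤ)+c-1, (b:ℤ)+c+1) m = 0 := by
      cases a with
      | zero =>
        intro m _
        rw [hφ.zero_of_not_admissible _ (by rw [adm_iff]; push_cast; omega)]
        rfl
      | succ a' =>
        intro m hm
        rw [show (((a'+1:ℕ):ℤ)+(b:ℤ), ((a'+1:ℕ):ℤ)+(c:ℤ)-1, (b:ℤ)+(c:ℤ)+1) = jmap (a', b+1, c) from by
          simp only [jmap, Prod.mk.injEq]; push_cast; refine ⟨?_, ?_, ?_⟩ <;> first | trivial | omega]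
        have hg : Good φ (a',b+1,c) := IH (a'+(b+1)+c) (by omega) (a',b+1,c) rfl
        exact good_van hg m (by simp only [kdeg, degN] at hm ⊢; omega)
    have hz4 : ∀ m : ℤ × ℤ × ℤ, a+b+(c+1) ≤ degN m →
        φ ((a:ℤ)+b, (a:ℤ)+c-1, (b:ℤ)+c-1) m = 0 := by
      cases c with
      | zero =>
        intro m _
        rw [hφ.zero_of_not_admissible _ (by rw [adm_iff]; push_cast; omega)]
        rfl
      | succ c' =>
        intro m hm
        rw [show ((a:ℤ)+(b:ℤ), (a:ℤ)+((c'+1:ℕ):ℤ)-1, (b:ℤ)+((c'+1:ℕ):ℤ)-1) = jmap (a, b, c') from by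
          simp only [jmap, Prod.mk.injEq]; push_cast; refine ⟨?_, ?_, ?_⟩ <;> first | trivial | omega]
        have hg : Good φ (a,b,c') := IH (a+b+c') (by omega) (a,b,c') rfl
        exact good_van hg m (by simp only [kdeg, degN] at hm ⊢; omega)
    refine ⟨(Kc 1 1 ((a:ℤ)+c) ((b:ℤ)+c) ((a:ℤ)+b))⁻¹ * c0,
      mul_ne_zero (inv_ne_zero hK) hc0, ?_⟩
    rintro ⟨m1, m2, m3⟩ hdegm
    simp only [kdeg] at hdegm
    have hm := DFunLike.congr_fun heq (m1, m2, m3)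
    simp only [Finsupp.add_apply, Finsupp.smul_apply, smul_eq_mul, shiftLP_apply,
      Prod.mk_sub_mk, sub_zero, sub_neg_eq_add] at hm
    rw [hz2 _ hdegm, hz3 _ hdegm, hz4 _ hdegm, mul_zero, mul_zero, mul_zero,
      add_zero, add_zero, add_zero] at hm
    rw [hval (m1, m2, m3-1) (by simp only [kdeg, degN] at hdegm ⊢; omega),
      hval (m1, m2, m3+1) (by simp only [kdeg, degN] at hdegm ⊢; omega)] at hm
    simp only [nA, Prod.mk.injEq] at hm
    have hdegm' : a + b + (c + 1) ≤ m1.natAbs + m2.natAbs + m3.natAbs := by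
      simp only [degN] at hdegm; omega
    rw [key3 c0 a b c m1 m2 m3 hdegm'] at hm
    rw [← inv_mul_cancel_left₀ hK ((φ (jmap (a,b,c+1))) (m1,m2,m3)), ← hm]
    simp only [nA, Prod.mk.injEq]
    split_ifs with h
    · rfl
    · rw [mul_zero]

section Tri
variable {ι : Type*} (d : ι → ℕ) (ψ : ι → (ι →₀ ℂ))

lemma tri_li (hdiag : ∀ i, ψ i i ≠ 0)
    (htri : ∀ i m, ψ i m ≠ 0 → m = i ∨ d m < d i) : LinearIndependent ℂ ψ := by
  rw [linearIndependent_iff']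
  intro s g hsum i hi
  by_contra hgi
  have hne : (s.filter (fun j => g j ≠ 0)).Nonempty :=
    ⟨i, Finset.mem_filter.2 ⟨hi, hgi⟩⟩
  obtain ⟨i0, hi0mem, hmax⟩ := Finset.exists_max_image _ d hne
  rw [Finset.mem_filter] at hi0mem
  have happ : (∑ j ∈ s, g j • ψ j) i0 = 0 := by rw [hsum]; rfl
  rw [Finsupp.finset_sum_apply] at happ
  simp only [Finsupp.smul_apply, smul_eq_mul] at happ
  rw [Finset.sum_eq_single i0] at happ
  · exact mul_ne_zero hi0mem.2 (hdiag i0) happ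
  · intro j hj hji
    by_cases hgj : g j = 0
    · rw [hgj, zero_mul]
    · have hdj : d j ≤ d i0 := hmax j (Finset.mem_filter.2 ⟨hj, hgj⟩)
      have : ψ j i0 = 0 := by
        by_contra hne'
        rcases htri j i0 hne' with h | h
        · exact hji h.symm
        · omega
      rw [this, mul_zero]
  · intro h; exact absurd hi0mem.1 h

lemma tri_span_aux (hdiag : ∀ i, ψ i i ≠ 0)
    (htri : ∀ i m, ψ i m ≠ 0 → m = i ∨ d m < d i) :
    ∀ N (p : ι →₀ ℂ), (∀ m ∈ p.support, d m < N) →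
      p ∈ Submodule.span ℂ (Set.range ψ) := by
  intro N
  induction N with
  | zero =>
    intro p hp
    have : p = 0 := by
      ext m
      by_contra hm
      exact absurd (hp m (Finsupp.mem_support_iff.2 (by simpa using hm))) (by omega)
    simp [this]
  | succ N IH =>
    intro p hp
    classical
    set s := p.support.filter (fun m => d m = N) with hs
    set q := p - ∑ m ∈ s, (p m / ψ m m) • ψ m with hq
    have hq0 : ∀ m, N ≤ d m → q m = 0 := by
      intro m hdm
      rw [hq, Finsupp.sub_apply, Finsupp.finset_sum_apply]
      simp only [Finsupp.smul_apply, smul_eq_mul]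
      by_cases hm : m ∈ s
      · rw [Finset.sum_eq_single m]
        · rw [div_mul_cancel₀ _ (hdiag m), sub_self]
        · intro i hiS hne
          have hdi : d i = N := (Finset.mem_filter.1 hiS).2
          have hdm' : d m = N := (Finset.mem_filter.1 hm).2
          have : ψ i m = 0 := by
            by_contra hne'
            rcases htri i m hne' with h | h
            · exact hne (h ▸ rfl)
            · omega
          rw [this, mul_zero]
        · intro h; exact absurd hm h
      · have hpm : p m = 0 := by
          by_contra hpm
          have hmem : m ∈ p.support := Finsupp.mem_support_iff.2 hpm
          have : d m < N + 1 := hp m hmem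
          have hdm' : d m = N := by omega
          exact hm (Finset.mem_filter.2 ⟨hmem, hdm'⟩)
        rw [hpm, Finset.sum_eq_zero, sub_zero]
        intro i hiS
        have hdi : d i = N := (Finset.mem_filter.1 hiS).2
        have : ψ i m = 0 := by
          by_contra hne'
          rcases htri i m hne' with h | h
          · exact hm (h ▸ hiS)
          · -- d m < d i = N contradicts N ≤ d m
            omega
        rw [this, mul_zero]
    have hqspan : q ∈ Submodule.span ℂ (Set.range ψ) := by
      apply IH
      intro m hmem
      rw [Finsupp.mem_support_iff] at hmem
      by_contra hbig
      exact hmem (hq0 m (by omega))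
    have hsum_span : (∑ m ∈ s, (p m / ψ m m) • ψ m) ∈ Submodule.span ℂ (Set.range ψ) := by
      apply Submodule.sum_mem
      intro i _
      exact Submodule.smul_mem _ _ (Submodule.subset_span ⟨i, rfl⟩)
    have : p = q + ∑ m ∈ s, (p m / ψ m m) • ψ m := by rw [hq, sub_add_cancel]
    rw [this]
    exact Submodule.add_mem _ hqspan hsum_span
end Tri


lemma jmap_inj : Function.Injective jmap := by
  rintro ⟨a,b,c⟩ ⟨a',b',c'⟩ h
  simp only [jmap, Prod.mk.injEq] at h ⊢
  omega

lemma adm_exists {j : ℤ × ℤ × ℤ} (h : Admissible j) : ∃ k, jmap k = j := by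
  obtain ⟨j1, j2, j3⟩ := j
  rw [adm_iff] at h
  refine ⟨(((j1+j2-j3)/2).toNat, ((j1-j2+j3)/2).toNat, ((-j1+j2+j3)/2).toNat), ?_⟩
  simp only [jmap, Prod.mk.injEq]
  omega

lemma emb_inj : Function.Injective emb := by
  rintro ⟨a,b,c⟩ ⟨a',b',c'⟩ h
  simp only [emb, Prod.mk.injEq] at h ⊢
  omega

noncomputable def fold : LP →ₗ[ℂ] ((ℕ × ℕ × ℕ) →₀ ℂ) :=
  Finsupp.lcomapDomain emb emb_inj

lemma fold_apply (p : LP) (k : ℕ × ℕ × ℕ) : fold p k = p (emb k) := rfl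

lemma nA_emb (k : ℕ × ℕ × ℕ) : nA (emb k) = k := by
  simp [nA, emb]

lemma degN_emb (k : ℕ × ℕ × ℕ) : degN (emb k) = kdeg k := by
  simp [degN, emb, kdeg]

lemma inv_eval {p : LP} (hp : InvariantH p) (m : ℤ × ℤ × ℤ) : p m = p (emb (nA m)) := by
  obtain ⟨h1, h2, h3⟩ := hp
  obtain ⟨m1, m2, m3⟩ := m
  have e1 : p (m1, m2, m3) = p ((m1.natAbs : ℤ), m2, m3) := by
    rcases Int.natAbs_eq m1 with h | h
    · exact congrArg p (by rw [Prod.mk.injEq, Prod.mk.injEq]; exact ⟨h, rfl, rfl⟩)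
    · calc p (m1, m2, m3) = p (-m1, m2, m3) := (h1 (m1, m2, m3)).symm
        _ = p ((m1.natAbs : ℤ), m2, m3) := by
            exact congrArg p (by rw [Prod.mk.injEq, Prod.mk.injEq]; refine ⟨by omega, rfl, rfl⟩)
  have e2 : p ((m1.natAbs : ℤ), m2, m3) = p ((m1.natAbs : ℤ), (m2.natAbs : ℤ), m3) := by
    rcases Int.natAbs_eq m2 with h | h
    · exact congrArg p (by rw [Prod.mk.injEq, Prod.mk.injEq]; exact ⟨rfl, h, rfl⟩)
    · calc p ((m1.natAbs : ℤ), m2, m3) = p ((m1.natAbs : ℤ), -m2, m3) :=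
            (h2 ((m1.natAbs : ℤ), m2, m3)).symm
        _ = p ((m1.natAbs : ℤ), (m2.natAbs : ℤ), m3) := by
            exact congrArg p (by rw [Prod.mk.injEq, Prod.mk.injEq]; refine ⟨rfl, by omega, rfl⟩)
  have e3 : p ((m1.natAbs : ℤ), (m2.natAbs : ℤ), m3) =
      p ((m1.natAbs : ℤ), (m2.natAbs : ℤ), (m3.natAbs : ℤ)) := by
    rcases Int.natAbs_eq m3 with h | h
    · exact congrArg p (by rw [Prod.mk.injEq, Prod.mk.injEq]; exact ⟨rfl, rfl, h⟩)
    · calc p ((m1.natAbs : ℤ), (m2.natAbs : ℤ), m3)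
          = p ((m1.natAbs : ℤ), (m2.natAbs : ℤ), -m3) :=
            (h3 ((m1.natAbs : ℤ), (m2.natAbs : ℤ), m3)).symm
        _ = p ((m1.natAbs : ℤ), (m2.natAbs : ℤ), (m3.natAbs : ℤ)) := by
            exact congrArg p (by rw [Prod.mk.injEq, Prod.mk.injEq]; refine ⟨rfl, rfl, by omega⟩)
  exact e1.trans (e2.trans e3)

noncomputable def Hsub : Submodule ℂ LP where
  carrier := {p | InvariantH p}
  add_mem' := by
    rintro p q ⟨p1, p2, p3⟩ ⟨q1, q2, q3⟩
    exact ⟨fun m => by simp only [Finsupp.add_apply, p1 m, q1 m],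
           fun m => by simp only [Finsupp.add_apply, p2 m, q2 m],
           fun m => by simp only [Finsupp.add_apply, p3 m, q3 m]⟩
  zero_mem' := ⟨fun m => rfl, fun m => rfl, fun m => rfl⟩
  smul_mem' := by
    rintro t p ⟨p1, p2, p3⟩
    exact ⟨fun m => by simp only [Finsupp.smul_apply, p1 m],
           fun m => by simp only [Finsupp.smul_apply, p2 m],
           fun m => by simp only [Finsupp.smul_apply, p3 m]⟩


/-- For a family satisfying the genus-two Pieri rule with
`φ_{0,0,0} = 1`, the family `(φ_j)_{j ∈ J}` indexed by the admissible triples is a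
basis of `H` as a `ℂ`-vector space: it is linearly independent and its span is
exactly the set of invariant Laurent polynomials. -/
theorem genus_two_pieri_basis (φ : ℤ × ℤ × ℤ → LP) (hφ : IsPieriFamily φ) :
    LinearIndependent ℂ (fun j : {j : ℤ × ℤ × ℤ // Admissible j} => φ j.1) ∧
    (Submodule.span ℂ (Set.range fun j : {j : ℤ × ℤ × ℤ // Admissible j} => φ j.1) :
        Set LP) = {p : LP | InvariantH p} := by
  classical
  set v : ℕ × ℕ × ℕ → LP := fun k => φ (jmap k) with hv
  set ψ : ℕ × ℕ × ℕ → ((ℕ × ℕ × ℕ) →₀ ℂ) := fun k => fold (v k) with hψ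
  have hdiag : ∀ k, ψ k k ≠ 0 := by
    intro k
    obtain ⟨c0, hc0, hval⟩ := good_all φ hφ (kdeg k) k rfl
    rw [hψ, hv]
    simp only [fold_apply]
    rw [hval (emb k) (by rw [degN_emb]), if_pos (nA_emb k)]
    exact hc0
  have htri : ∀ k m, ψ k m ≠ 0 → m = k ∨ kdeg m < kdeg k := by
    intro k m hne
    by_contra hcon
    push_neg at hcon
    obtain ⟨hmk, hge⟩ := hcon
    obtain ⟨c0, hc0, hval⟩ := good_all φ hφ (kdeg k) k rfl
    apply hne
    rw [hψ, hv]
    simp only [fold_apply]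
    rw [hval (emb m) (by rw [degN_emb]; omega), if_neg]
    rw [nA_emb]
    exact hmk
  have hli : LinearIndependent ℂ ψ := tri_li kdeg ψ hdiag htri
  have hliv : LinearIndependent ℂ v := hli.of_comp fold
  -- section of jmap
  have hsec : ∀ j : {j : ℤ × ℤ × ℤ // Admissible j}, jmap (Classical.choose (adm_exists j.2)) = j.1 :=
    fun j => Classical.choose_spec (adm_exists j.2)
  set g : {j : ℤ × ℤ × ℤ // Admissible j} → ℕ × ℕ × ℕ :=
    fun j => Classical.choose (adm_exists j.2) with hg
  have hginj : Function.Injective g := by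
    intro j j' h
    have : jmap (g j) = jmap (g j') := by rw [h]
    rw [hsec j, hsec j'] at this
    exact Subtype.ext this
  have hcomp : (fun j : {j : ℤ × ℤ × ℤ // Admissible j} => φ j.1) = v ∘ g := by
    funext j
    simp only [Function.comp_apply, hv]
    rw [hsec j]
  have hrange : (Set.range fun j : {j : ℤ × ℤ × ℤ // Admissible j} => φ j.1) = Set.range v := by
    apply Set.Subset.antisymm
    · rintro _ ⟨j, rfl⟩
      exact ⟨g j, by rw [hv]; simp only; rw [hsec j]⟩
    · rintro _ ⟨k, rfl⟩
      exact ⟨⟨jmap k, adm_jmap k⟩, rfl⟩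
  constructor
  · rw [hcomp]
    exact hliv.comp g hginj
  · rw [hrange]
    apply Set.Subset.antisymm
    · have : Submodule.span ℂ (Set.range v) ≤ Hsub := by
        rw [Submodule.span_le]
        rintro _ ⟨k, rfl⟩
        exact hφ.mem_H (jmap k)
      exact fun p hp => this hp
    · intro p hp
      have hpH : InvariantH p := hp
      -- fold p lies in the span of ψ
      have hfp : fold p ∈ Submodule.span ℂ (Set.range ψ) := by
        apply tri_span_aux kdeg ψ hdiag htri ((fold p).support.sup kdeg + 1)
        intro m hm
        exact Nat.lt_succ_of_le (Finset.le_sup hm)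
      rw [Finsupp.mem_span_range_iff_exists_finsupp] at hfp
      obtain ⟨cc, hcc⟩ := hfp
      set q : LP := cc.sum (fun i a => a • v i) with hq
      have hqspan : q ∈ Submodule.span ℂ (Set.range v) := by
        apply Submodule.finsuppSum_mem
        intro i _
        exact Submodule.smul_mem _ _ (Submodule.subset_span ⟨i, rfl⟩)
      have hfq : fold q = fold p := by
        rw [hq, map_finsuppSum]
        rw [← hcc]
        apply Finsupp.sum_congr
        intro i _
        rw [map_smul]
      have hqH : InvariantH q := by
        have : Submodule.span ℂ (Set.range v) ≤ Hsub := by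
          rw [Submodule.span_le]
          rintro _ ⟨k, rfl⟩
          exact hφ.mem_H (jmap k)
        exact this hqspan
      have hdiff : InvariantH (p - q) := by
        have := Hsub.sub_mem (show p ∈ Hsub from hpH) (show q ∈ Hsub from hqH)
        exact this
      have : p - q = 0 := by
        ext m
        rw [Finsupp.zero_apply, inv_eval hdiff m]
        have : fold (p - q) = 0 := by rw [map_sub, hfq, sub_self]
        have h0 := DFunLike.congr_fun this (nA m)
        rw [fold_apply] at h0
        exact h0
      have : p = q := by
        have := sub_eq_zero.mp this
        exact this
      rw [this]
      exact hqspan
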